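/- Let (G_j)_{j∈J} be a directed system of groups with directed colimit G, let j₀ ∈ J and g ∈ G_{j₀} with g ∈ [G_{j₀}, G_{j₀}]. Then scl_G(ḡ) = inf_{j ≥ j₀} scl_{G_j}(g_j), where scl denotes stable commutator length. -/

import Mathlib

open scoped commutatorElement
/-- The set of lengths of expressions of `g` as a product of commutators. -/
def clSet {G : Type*} [Group G] (g : G) : Set ℕ :=
  {n | ∃ l : List (G × G), l.length = n ∧ (l.map fun p => ⁅p.1, p.2⁆).prod = g}

/-- The commutator length of `g` (junk value if `g ∉ [G,G]`). -/
noncomputable def cl {G : Type*} [Group G] (g : G) : ℕ := sInf (clSet g)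

/-- Stable commutator length, as the infimum of `cl(gⁿ)/n` over `n ≥ 1`
(which equals the limit, by Fekete's subadditivity lemma). -/
noncomputable def scl {G : Type*} [Group G] (g : G) : ℝ :=
  ⨅ n : ℕ+, (cl (g ^ (n : ℕ)) : ℝ) / (n : ℕ)

lemma clSet_map {G H : Type*} [Group G] [Group H] (ψ : G →* H) {g : G} {n : ℕ}
    (h : n ∈ clSet g) : n ∈ clSet (ψ g) := by
  obtain ⟨l, hl, hp⟩ := h
  refine ⟨l.map (Prod.map ψ ψ), by simp [hl], ?_⟩
  rw [← hp, map_list_prod]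
  simp [List.map_map, Function.comp_def, map_commutatorElement]

lemma clSet_mul {G : Type*} [Group G] {a b : G} {m n : ℕ}
    (ha : m ∈ clSet a) (hb : n ∈ clSet b) : m + n ∈ clSet (a * b) := by
  obtain ⟨l₁, h1, p1⟩ := ha
  obtain ⟨l₂, h2, p2⟩ := hb
  exact ⟨l₁ ++ l₂, by simp [h1, h2], by simp [p1, p2]⟩

lemma clSet_one {G : Type*} [Group G] : (0 : ℕ) ∈ clSet (1 : G) := ⟨[], rfl, rfl⟩

lemma clSet_pow {G : Type*} [Group G] {g : G} (h : (clSet g).Nonempty) (n : ℕ) :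
    (clSet (g ^ n)).Nonempty := by
  obtain ⟨m, hm⟩ := h
  induction n with
  | zero => exact ⟨0, by simpa using clSet_one⟩
  | succ k ih =>
    obtain ⟨r, hr⟩ := ih
    exact ⟨r + m, by rw [pow_succ]; exact clSet_mul hr hm⟩

lemma clSet_nonempty_of_commutator {G : Type*} [Group G] {g : G}
    (hg : g ∈ commutator G) : (clSet g).Nonempty := by
  rw [commutator_eq_closure] at hg
  refine Subgroup.closure_induction ?_ ?_ ?_ ?_ hg
  · rintro x ⟨a, b, rfl⟩
    exact ⟨1, [(a, b)], rfl, by simp⟩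
  · exact ⟨0, clSet_one⟩
  · rintro x y - - ⟨m, hm⟩ ⟨n, hn⟩
    exact ⟨m + n, clSet_mul hm hn⟩
  · rintro x - ⟨m, l, hl, hp⟩
    refine ⟨m, (l.reverse.map (Prod.swap)), by simp [hl], ?_⟩
    rw [← hp, List.prod_inv_reverse]
    simp [List.map_reverse, List.map_map, Function.comp_def, commutatorElement_inv]

lemma cl_hom_le {G H : Type*} [Group G] [Group H] (ψ : G →* H) {g : G}
    (h : (clSet g).Nonempty) : cl (ψ g) ≤ cl g :=
  Nat.sInf_le (clSet_map ψ (Nat.sInf_mem h))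

lemma scl_bddBelow {G : Type*} [Group G] (g : G) :
    BddBelow (Set.range fun n : ℕ+ => (cl (g ^ (n : ℕ)) : ℝ) / (n : ℕ)) := by
  refine ⟨0, ?_⟩
  rintro x ⟨n, rfl⟩
  positivity

lemma scl_le_cl_div {G : Type*} [Group G] (g : G) (n : ℕ+) :
    scl g ≤ (cl (g ^ (n : ℕ)) : ℝ) / (n : ℕ) :=
  ciInf_le (scl_bddBelow g) n

lemma scl_hom_le {G H : Type*} [Group G] [Group H] (ψ : G →* H) {g : G}
    (h : (clSet g).Nonempty) : scl (ψ g) ≤ scl g := by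
  refine ciInf_mono (scl_bddBelow _) fun n => ?_
  have h1 : cl ((ψ g) ^ (n : ℕ)) ≤ cl (g ^ (n : ℕ)) := by
    rw [← map_pow]
    exact cl_hom_le ψ (clSet_pow h n)
  have h2 : ((cl ((ψ g) ^ (n : ℕ)) : ℝ)) ≤ (cl (g ^ (n : ℕ)) : ℝ) := by exact_mod_cast h1
  gcongr

theorem scl_of_directed_colimit
    {J : Type*} [Preorder J]
    (hdir : ∀ i j : J, ∃ k, i ≤ k ∧ j ≤ k)
    (G : J → Type*) [∀ j, Group (G j)]
    (f : ∀ i j : J, i ≤ j → (G i →* G j))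
    (hrefl : ∀ (i : J) (x : G i), f i i le_rfl x = x)
    (htrans : ∀ (i j k : J) (hij : i ≤ j) (hjk : j ≤ k) (x : G i),
      f j k hjk (f i j hij x) = f i k (hij.trans hjk) x)
    (GG : Type*) [Group GG] (φ : ∀ j, G j →* GG)
    (hcompat : ∀ (i j : J) (hij : i ≤ j) (x : G i), φ j (f i j hij x) = φ i x)
    (hsurj : ∀ y : GG, ∃ j x, φ j x = y)
    (heq : ∀ (i : J) (x y : G i), φ i x = φ i y →
      ∃ j, ∃ hij : i ≤ j, f i j hij x = f i j hij y)
    (j₀ : J) (g : G j₀) (hg : g ∈ commutator (G j₀)) :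
    scl (φ j₀ g) = sInf {x : ℝ | ∃ j, ∃ h : j₀ ≤ j, x = scl (f j₀ j h g)} := by
  have hgne : (clSet g).Nonempty := clSet_nonempty_of_commutator hg
  set S := {x : ℝ | ∃ j, ∃ h : j₀ ≤ j, x = scl (f j₀ j h g)} with hS
  have hfne : ∀ (j : J) (h : j₀ ≤ j), (clSet (f j₀ j h g)).Nonempty :=
    fun j h => ⟨cl g, clSet_map (f j₀ j h) (Nat.sInf_mem hgne)⟩
  have hlow : ∀ x ∈ S, scl (φ j₀ g) ≤ x := by
    rintro x ⟨j, h, rfl⟩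
    have := scl_hom_le (φ j) (hfne j h)
    rwa [hcompat j₀ j h g] at this
  have hSne : S.Nonempty := ⟨_, j₀, le_rfl, rfl⟩
  refine le_antisymm (le_csInf hSne hlow) (le_of_forall_pos_le_add fun ε hε => ?_)
  -- choose n with cl((φ g)^n)/n < scl + ε
  obtain ⟨n, hn⟩ := exists_lt_of_ciInf_lt
    (lt_add_of_pos_right (scl (φ j₀ g)) hε :
      (⨅ m : ℕ+, (cl ((φ j₀ g) ^ (m : ℕ)) : ℝ) / (m : ℕ)) < scl (φ j₀ g) + ε)
  have hφne : (clSet ((φ j₀ g) ^ (n : ℕ))).Nonempty :=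
    clSet_pow ⟨cl g, clSet_map (φ j₀) (Nat.sInf_mem hgne)⟩ n
  obtain ⟨l, hl, hp⟩ := Nat.sInf_mem hφne
  -- lift the list of commutators to some stage k ≥ j₀
  have lift : ∀ L : List (GG × GG), ∃ k, ∃ _ : j₀ ≤ k, ∃ L' : List (G k × G k),
      L'.map (Prod.map (φ k) (φ k)) = L := by
    intro L
    induction L with
    | nil => exact ⟨j₀, le_rfl, [], rfl⟩
    | cons a t ih =>
      obtain ⟨k, hk, L', hL'⟩ := ih
      obtain ⟨ja, xa, hxa⟩ := hsurj a.1
      obtain ⟨jb, xb, hxb⟩ := hsurj a.2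
      obtain ⟨k1, hk1a, hk1b⟩ := hdir ja jb
      obtain ⟨k2, hkk2, hk1k2⟩ := hdir k k1
      refine ⟨k2, hk.trans hkk2,
        (f ja k2 (hk1a.trans hk1k2) xa, f jb k2 (hk1b.trans hk1k2) xb) ::
          L'.map (Prod.map (f k k2 hkk2) (f k k2 hkk2)), ?_⟩
      rw [List.map_cons]
      congr 1
      · simp [Prod.map, hcompat, hxa, hxb]
      · rw [← hL', List.map_map]
        refine List.map_congr_left fun p _ => ?_
        simp [Prod.map, Function.comp_def, hcompat]
  obtain ⟨k, hk, l', hl'⟩ := lift l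
  have hlen : l'.length = cl ((φ j₀ g) ^ (n : ℕ)) := by
    show l'.length = sInf (clSet _)
    rw [← hl, ← hl', List.length_map]
  have key : φ k ((l'.map fun p => ⁅p.1, p.2⁆).prod) = φ k ((f j₀ k hk g) ^ (n : ℕ)) := by
    rw [map_list_prod, map_pow, hcompat, ← hp, ← hl', List.map_map, List.map_map]
    refine congrArg List.prod (List.map_congr_left fun p _ => ?_)
    simp [Prod.map, Function.comp_def, map_commutatorElement]
  obtain ⟨j, hkj, hej⟩ := heq k _ _ key
  have hj : j₀ ≤ j := hk.trans hkj
  have hmem : cl ((φ j₀ g) ^ (n : ℕ)) ∈ clSet ((f j₀ j hj g) ^ (n : ℕ)) := by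
    have h0 := clSet_map (f k j hkj) (show _ ∈ clSet ((l'.map fun p => ⁅p.1, p.2⁆).prod)
      from ⟨l', hlen, rfl⟩)
    rw [hej, map_pow, htrans] at h0
    exact h0
  have h1 : cl ((f j₀ j hj g) ^ (n : ℕ)) ≤ cl ((φ j₀ g) ^ (n : ℕ)) := Nat.sInf_le hmem
  have h2 : scl (f j₀ j hj g) ≤ (cl ((φ j₀ g) ^ (n : ℕ)) : ℝ) / (n : ℕ) := by
    refine (scl_le_cl_div _ n).trans ?_
    have h3 : ((cl ((f j₀ j hj g) ^ (n : ℕ)) : ℝ)) ≤ (cl ((φ j₀ g) ^ (n : ℕ)) : ℝ) := by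
      exact_mod_cast h1
    gcongr
  have h4 : sInf S ≤ scl (f j₀ j hj g) := csInf_le ⟨scl (φ j₀ g), hlow⟩ ⟨j, hj, rfl⟩
  linarith
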